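/- For every symmetric positive definite 2×2 matrix M there exists an M-obtuse superbase of Z^2, and each of its elements e satisfies ‖e‖² ≤ 2 ‖M‖ ‖M⁻¹‖ (Euclidean norm and operator norm). -/

import Mathlib

def det2 (f g : ℤ × ℤ) : ℤ := f.1 * g.2 - f.2 * g.1

/-- Bilinear form `⟨f, M g⟩` on `ℤ²` (vectors coerced to `ℝ`). -/
def qf (M : Matrix (Fin 2) (Fin 2) ℝ) (f g : ℤ × ℤ) : ℝ :=
  (f.1 : ℝ) * (M 0 0 * g.1 + M 0 1 * g.2) + (f.2 : ℝ) * (M 1 0 * g.1 + M 1 1 * g.2)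

/-- A superbase of `ℤ²`. -/
def IsSuperbase (e₀ e₁ e₂ : ℤ × ℤ) : Prop := e₀ + e₁ + e₂ = 0 ∧ |det2 e₁ e₂| = 1

/-- An `M`-obtuse superbase. -/
def IsObtuse (M : Matrix (Fin 2) (Fin 2) ℝ) (e₀ e₁ e₂ : ℤ × ℤ) : Prop :=
  qf M e₀ e₁ ≤ 0 ∧ qf M e₀ e₂ ≤ 0 ∧ qf M e₁ e₂ ≤ 0

/-- Operator norm of a `2×2` real matrix acting on Euclidean space. -/
noncomputable def opNorm (M : Matrix (Fin 2) (Fin 2) ℝ) : ℝ :=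
  ‖Matrix.toEuclideanCLM (𝕜 := ℝ) M‖

set_option synthInstance.maxHeartbeats 1000000
set_option maxHeartbeats 1000000
set_option linter.unreachableTactic false
set_option linter.unusedTactic false
set_option linter.unusedVariables false

namespace Stmt4Aux
open Matrix

open scoped RealInnerProductSpace

lemma toCLM_apply (A : Matrix (Fin 2) (Fin 2) ℝ) (x : EuclideanSpace ℝ (Fin 2)) (i : Fin 2) :
    (Matrix.toEuclideanCLM (𝕜 := ℝ) A) x i = A.mulVec x i :=
  congrFun (Matrix.ofLp_toEuclideanCLM (𝕜 := ℝ) A x) i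

lemma norm_sq_eq (x : EuclideanSpace ℝ (Fin 2)) : ‖x‖ ^ 2 = x 0 ^ 2 + x 1 ^ 2 := by
  rw [EuclideanSpace.norm_eq, Real.sq_sqrt (by positivity)]
  simp [Fin.sum_univ_two, sq_abs]

/-- Fact P : quadratic form bounded by opNorm. -/
lemma factP (A : Matrix (Fin 2) (Fin 2) ℝ) (a b : ℝ) :
    a * (A 0 0 * a + A 0 1 * b) + b * (A 1 0 * a + A 1 1 * b) ≤ opNorm A * (a ^ 2 + b ^ 2) := by
  set x : EuclideanSpace ℝ (Fin 2) := (WithLp.equiv 2 (Fin 2 → ℝ)).symm ![a, b] with hx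
  have hx0 : x 0 = a := rfl
  have hx1 : x 1 = b := rfl
  have h1 : a * (A 0 0 * a + A 0 1 * b) + b * (A 1 0 * a + A 1 1 * b)
      = ⟪x, (Matrix.toEuclideanCLM (𝕜 := ℝ) A) x⟫ := by
    rw [PiLp.inner_apply]
    simp only [Fin.sum_univ_two, RCLike.inner_apply, conj_trivial, toCLM_apply,
      Matrix.mulVec, dotProduct, Fin.sum_univ_two, hx0, hx1]
    try ring
  have h2 : ⟪x, (Matrix.toEuclideanCLM (𝕜 := ℝ) A) x⟫ ≤ ‖x‖ * ‖(Matrix.toEuclideanCLM (𝕜 := ℝ) A) x‖ :=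
    real_inner_le_norm _ _
  have h3 : ‖(Matrix.toEuclideanCLM (𝕜 := ℝ) A) x‖ ≤ opNorm A * ‖x‖ :=
    ContinuousLinearMap.le_opNorm _ x
  have h4 : ‖x‖ ^ 2 = a ^ 2 + b ^ 2 := by rw [norm_sq_eq, hx0, hx1]
  have h5 : (0:ℝ) ≤ opNorm A := norm_nonneg _
  nlinarith [norm_nonneg x, norm_nonneg ((Matrix.toEuclideanCLM (𝕜 := ℝ) A) x)]

lemma opNorm_nonneg' (A : Matrix (Fin 2) (Fin 2) ℝ) : 0 ≤ opNorm A := norm_nonneg _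


/-- `det M * ‖M⁻¹‖ ≤ ‖M‖` for symmetric `M` with positive determinant. -/
lemma det_mul_opNorm_inv_le (M : Matrix (Fin 2) (Fin 2) ℝ) (hM : M 1 0 = M 0 1)
    (hdet : 0 < M.det) : M.det * opNorm M⁻¹ ≤ opNorm M := by
  have hdet' : M.det ≠ 0 := ne_of_gt hdet
  have hadj : M.det • M⁻¹ = M.adjugate := by
    rw [Matrix.inv_def, smul_smul, Ring.inverse_eq_inv, mul_inv_cancel₀ hdet', one_smul]
  have h1 : M.det * opNorm M⁻¹ = opNorm (M.det • M⁻¹) := by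
    unfold opNorm
    rw [_root_.map_smul]
    rw [norm_smul M.det (Matrix.toEuclideanCLM (𝕜 := ℝ) M⁻¹)]
    simp [abs_of_pos hdet]
  rw [h1, hadj]
  -- now show `opNorm M.adjugate ≤ opNorm M`
  apply ContinuousLinearMap.opNorm_le_bound _ (norm_nonneg _)
  intro x
  set y : EuclideanSpace ℝ (Fin 2) := (WithLp.equiv 2 (Fin 2 → ℝ)).symm ![x 1, -(x 0)] with hy
  have hy0 : y 0 = x 1 := rfl
  have hy1 : y 1 = -(x 0) := rfl
  have hadj00 : M.adjugate 0 0 = M 1 1 := by rw [Matrix.adjugate_fin_two]; rfl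
  have hadj01 : M.adjugate 0 1 = -(M 0 1) := by rw [Matrix.adjugate_fin_two]; rfl
  have hadj10 : M.adjugate 1 0 = -(M 1 0) := by rw [Matrix.adjugate_fin_two]; rfl
  have hadj11 : M.adjugate 1 1 = M 0 0 := by rw [Matrix.adjugate_fin_two]; rfl
  have hxy : ‖x‖ = ‖y‖ := by
    rw [EuclideanSpace.norm_eq, EuclideanSpace.norm_eq]
    congr 1
    simp [Fin.sum_univ_two, hy0, hy1, sq_abs]
    ring
  have hn : ‖(Matrix.toEuclideanCLM (𝕜 := ℝ) M.adjugate) x‖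
      = ‖(Matrix.toEuclideanCLM (𝕜 := ℝ) M) y‖ := by
    rw [EuclideanSpace.norm_eq, EuclideanSpace.norm_eq]
    congr 1
    simp only [Fin.sum_univ_two, Real.norm_eq_abs, sq_abs, toCLM_apply,
      Matrix.mulVec, dotProduct, Fin.sum_univ_two, hy0, hy1,
      hadj00, hadj01, hadj10, hadj11, hM]
    ring
  rw [hn, hxy]
  exact ContinuousLinearMap.le_opNorm _ y


/-- Cauchy-Schwarz for a symmetric 2x2 form with nonneg determinant (ring identity). -/
lemma cs2 (A : Matrix (Fin 2) (Fin 2) ℝ) (hA : A 1 0 = A 0 1) (h : 0 ≤ A.det) (a b c d : ℝ) :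
    (a * (A 0 0 * c + A 0 1 * d) + b * (A 1 0 * c + A 1 1 * d)) ^ 2 ≤
      (a * (A 0 0 * a + A 0 1 * b) + b * (A 1 0 * a + A 1 1 * b)) *
      (c * (A 0 0 * c + A 0 1 * d) + d * (A 1 0 * c + A 1 1 * d)) := by
  rw [Matrix.det_fin_two] at h
  rw [hA] at h ⊢
  nlinarith [mul_nonneg h (sq_nonneg (a * d - b * c)), sq_nonneg (a*d - b*c)]

section Main

variable {M : Matrix (Fin 2) (Fin 2) ℝ}

lemma q_pos (hpos : M.PosDef) (v : ℤ × ℤ) (hv : v ≠ 0) : 0 < qf M v v := by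
  have hx : (![(v.1 : ℝ), (v.2 : ℝ)]) ≠ 0 := by
    intro h
    apply hv
    have h1 : ((v.1 : ℝ)) = 0 := congrFun h 0
    have h2 : ((v.2 : ℝ)) = 0 := congrFun h 1
    have : v.1 = 0 := by exact_mod_cast h1
    have : v.2 = 0 := by exact_mod_cast h2
    exact Prod.ext (by assumption) (by assumption)
  have : (0 : ℝ) < _ := hpos.dotProduct_mulVec_pos hx
  simp only [Matrix.mulVec, dotProduct, Fin.sum_univ_two, RCLike.re_to_real, Pi.star_apply, star_trivial] at this
  convert this using 1
  all_goals simp only [qf, Matrix.mulVec, dotProduct, Fin.sum_univ_two,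
    Matrix.cons_val_zero, Matrix.cons_val_one, Matrix.head_cons]
  all_goals try ring

lemma one_le_intsq (v : ℤ × ℤ) (hv : v ≠ 0) : (1 : ℤ) ≤ v.1 ^ 2 + v.2 ^ 2 := by
  have h : v.1 ≠ 0 ∨ v.2 ≠ 0 := by
    by_contra h
    push_neg at h
    exact hv (Prod.ext h.1 h.2)
  rcases h with h | h
  · nlinarith [Int.one_le_abs h, sq_abs v.1, sq_nonneg v.2, abs_nonneg v.1]
  · nlinarith [Int.one_le_abs h, sq_abs v.2, sq_nonneg v.1, abs_nonneg v.2]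

lemma inv_symm (hM10 : M 1 0 = M 0 1) : M⁻¹ 1 0 = M⁻¹ 0 1 := by
  have h : (M⁻¹)ᵀ = M⁻¹ := by
    rw [Matrix.transpose_nonsing_inv]
    rw [show Mᵀ = M from Matrix.ext fun i j => by fin_cases i <;> fin_cases j <;>
      simp [Matrix.transpose_apply, hM10]]
  have := congrFun (congrFun h 0) 1
  simpa [Matrix.transpose_apply] using this

/-- `‖v‖² ≤ ‖M⁻¹‖ ⬝ q(v)` for nonzero integer vectors. -/
lemma normsq_le_q (hM10 : M 1 0 = M 0 1) (hpos : M.PosDef) (v : ℤ × ℤ) (hv : v ≠ 0) :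
    ((v.1 : ℝ) ^ 2 + (v.2 : ℝ) ^ 2) ≤ opNorm M⁻¹ * qf M v v := by
  have hdet' : M.det ≠ 0 := ne_of_gt hpos.det_pos
  have hMM : M⁻¹ * M = 1 := Matrix.nonsing_inv_mul M (isUnit_iff_ne_zero.mpr hdet')
  have e00 : M⁻¹ 0 0 * M 0 0 + M⁻¹ 0 1 * M 1 0 = 1 := by
    have := congrFun (congrFun hMM 0) 0
    simpa [Matrix.mul_apply, Fin.sum_univ_two, Matrix.one_apply] using this
  have e01 : M⁻¹ 0 0 * M 0 1 + M⁻¹ 0 1 * M 1 1 = 0 := by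
    have := congrFun (congrFun hMM 0) 1
    simpa [Matrix.mul_apply, Fin.sum_univ_two, Matrix.one_apply] using this
  have e10 : M⁻¹ 1 0 * M 0 0 + M⁻¹ 1 1 * M 1 0 = 0 := by
    have := congrFun (congrFun hMM 1) 0
    simpa [Matrix.mul_apply, Fin.sum_univ_two, Matrix.one_apply] using this
  have e11 : M⁻¹ 1 0 * M 0 1 + M⁻¹ 1 1 * M 1 1 = 1 := by
    have := congrFun (congrFun hMM 1) 1
    simpa [Matrix.mul_apply, Fin.sum_univ_two, Matrix.one_apply] using this
  set a : ℝ := (v.1 : ℝ)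
  set b : ℝ := (v.2 : ℝ)
  set p : ℝ := M 0 0 * a + M 0 1 * b with hp
  set r : ℝ := M 1 0 * a + M 1 1 * b with hr
  have key1 : M⁻¹ 0 0 * p + M⁻¹ 0 1 * r = a := by
    rw [hp, hr]; linear_combination a * e00 + b * e01
  have key2 : M⁻¹ 1 0 * p + M⁻¹ 1 1 * r = b := by
    rw [hp, hr]; linear_combination a * e10 + b * e11
  have hinvdet : 0 ≤ (M⁻¹).det := by
    rw [Matrix.det_nonsing_inv, Ring.inverse_eq_inv]
    exact inv_nonneg.mpr hpos.det_pos.le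
  have hcs := cs2 M⁻¹ (inv_symm hM10) hinvdet a b p r
  -- LHS of cs2 equals a² + b²
  have hl : a * (M⁻¹ 0 0 * p + M⁻¹ 0 1 * r) + b * (M⁻¹ 1 0 * p + M⁻¹ 1 1 * r) = a ^ 2 + b ^ 2 := by
    rw [key1, key2]; ring
  have hq : p * (M⁻¹ 0 0 * p + M⁻¹ 0 1 * r) + r * (M⁻¹ 1 0 * p + M⁻¹ 1 1 * r) = qf M v v := by
    rw [key1, key2]
    simp only [qf]
    rw [hp, hr]; ring
  rw [hl, hq] at hcs
  have hfp := factP M⁻¹ a b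
  have hqpos := q_pos hpos v hv
  have hs : (1 : ℝ) ≤ a ^ 2 + b ^ 2 := by
    have := one_le_intsq v hv
    have : ((1 : ℤ) : ℝ) ≤ ((v.1 ^ 2 + v.2 ^ 2 : ℤ) : ℝ) := by exact_mod_cast this
    push_cast at this
    simpa using this
  nlinarith [norm_nonneg (Matrix.toEuclideanCLM (𝕜 := ℝ) M⁻¹)]


lemma qf_comm (hM10 : M 1 0 = M 0 1) (u v : ℤ × ℤ) : qf M u v = qf M v u := by
  simp only [qf]; rw [hM10]; ring

lemma sum_comp {e₀ e₁ e₂ : ℤ × ℤ} (h : e₀ + e₁ + e₂ = 0) :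
    e₀.1 + e₁.1 + e₂.1 = 0 ∧ e₀.2 + e₁.2 + e₂.2 = 0 :=
  ⟨by have := congrArg Prod.fst h; simpa using this,
   by have := congrArg Prod.snd h; simpa using this⟩

lemma sb_rot {e₀ e₁ e₂ : ℤ × ℤ} (h : IsSuperbase e₀ e₁ e₂) : IsSuperbase e₂ e₀ e₁ := by
  obtain ⟨hs, hd⟩ := h
  obtain ⟨h1, h2⟩ := sum_comp hs
  refine ⟨by rw [show e₂ + e₀ + e₁ = e₀ + e₁ + e₂ from by ring, hs], ?_⟩
  have : det2 e₀ e₁ = det2 e₁ e₂ := by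
    simp only [det2]
    linear_combination e₁.2 * h1 - e₁.1 * h2
  rw [this, hd]

lemma sb_swap {e₀ e₁ e₂ : ℤ × ℤ} (h : IsSuperbase e₀ e₁ e₂) : IsSuperbase e₀ e₂ e₁ := by
  obtain ⟨hs, hd⟩ := h
  refine ⟨by rw [show e₀ + e₂ + e₁ = e₀ + e₁ + e₂ from by ring, hs], ?_⟩
  have : det2 e₂ e₁ = -det2 e₁ e₂ := by simp only [det2]; ring
  rw [this, abs_neg, hd]

lemma sb_ne {e₀ e₁ e₂ : ℤ × ℤ} (h : IsSuperbase e₀ e₁ e₂) : e₁ ≠ 0 := by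
  intro he
  have hd := h.2
  rw [he] at hd
  simp [det2] at hd

lemma flip_sb {e₀ e₁ e₂ : ℤ × ℤ} (h : IsSuperbase e₀ e₁ e₂) :
    IsSuperbase e₁ (-e₂) (e₂ - e₁) := by
  obtain ⟨hs, hd⟩ := h
  refine ⟨by ring, ?_⟩
  have : det2 (-e₂) (e₂ - e₁) = -det2 e₁ e₂ := by
    simp only [det2, Prod.fst_neg, Prod.snd_neg, Prod.fst_sub, Prod.snd_sub]
    ring
  rw [this, abs_neg, hd]

lemma cast_comp {e₀ e₁ e₂ : ℤ × ℤ} (h : e₀ + e₁ + e₂ = 0) :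
    ((e₀.1 : ℝ) = -(e₁.1 : ℝ) - (e₂.1 : ℝ)) ∧ ((e₀.2 : ℝ) = -(e₁.2 : ℝ) - (e₂.2 : ℝ)) := by
  obtain ⟨h1, h2⟩ := sum_comp h
  constructor
  · have : e₀.1 = -e₁.1 - e₂.1 := by omega
    exact_mod_cast congrArg (Int.cast : ℤ → ℝ) this
  · have : e₀.2 = -e₁.2 - e₂.2 := by omega
    exact_mod_cast congrArg (Int.cast : ℤ → ℝ) this

lemma flip_energy (hM10 : M 1 0 = M 0 1) {e₀ e₁ e₂ : ℤ × ℤ} (h : e₀ + e₁ + e₂ = 0) :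
    qf M e₁ e₁ + qf M (-e₂) (-e₂) + qf M (e₂ - e₁) (e₂ - e₁)
      = qf M e₀ e₀ + qf M e₁ e₁ + qf M e₂ e₂ - 4 * qf M e₁ e₂ := by
  obtain ⟨h1, h2⟩ := cast_comp h
  simp only [qf, Prod.fst_neg, Prod.snd_neg, Prod.fst_sub, Prod.snd_sub]
  push_cast
  rw [h1, h2, hM10]
  ring

lemma qf_split (hM10 : M 1 0 = M 0 1) {e₀ e₁ e₂ : ℤ × ℤ} (h : e₀ + e₁ + e₂ = 0) :
    qf M e₀ e₁ + qf M e₀ e₂ = -qf M e₀ e₀ := by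
  obtain ⟨h1, h2⟩ := cast_comp h
  simp only [qf]
  rw [h1, h2]
  ring

lemma gram (hM10 : M 1 0 = M 0 1) (u v : ℤ × ℤ) (hd : |det2 u v| = 1) :
    qf M u u * qf M v v - (qf M u v) ^ 2 = M.det := by
  have h2 : ((det2 u v : ℤ) : ℝ) ^ 2 = 1 := by
    have : (det2 u v) ^ 2 = 1 := by rw [← sq_abs, hd]; norm_num
    exact_mod_cast congrArg (Int.cast : ℤ → ℝ) this
  rw [Matrix.det_fin_two]
  simp only [qf, det2] at *
  rw [hM10]
  push_cast at h2
  linear_combination (M 0 0 * M 1 1 - M 0 1 * M 0 1) * h2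

/-- Core bound: if `f` is a partner of `e` with suitable inner-product bounds,
then `‖e‖² ≤ 2‖M‖‖M⁻¹‖`. -/
lemma partner_bound (hM10 : M 1 0 = M 0 1) (hpos : M.PosDef) (e f : ℤ × ℤ)
    (he : e ≠ 0) (hf : f ≠ 0) (hd : |det2 e f| = 1)
    (hc : qf M e f ≤ 0) (hchalf : -qf M e f ≤ qf M e e / 2) (hcf : -qf M e f ≤ qf M f f) :
    ((e.1 ^ 2 + e.2 ^ 2 : ℤ) : ℝ) ≤ 2 * opNorm M * opNorm M⁻¹ := by
  set q₀ := qf M e e with hq₀def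
  set qF := qf M f f with hqFdef
  set c := qf M e f with hcdef
  have grm : q₀ * qF - c ^ 2 = M.det := gram hM10 e f hd
  have hB0 := normsq_le_q hM10 hpos e he
  have hBf := normsq_le_q hM10 hpos f hf
  have hq0 : 0 < q₀ := q_pos hpos e he
  have hqf : 0 < qF := q_pos hpos f hf
  have hdetpos := hpos.det_pos
  have hadj := det_mul_opNorm_inv_le M hM10 hdetpos
  have hNn : (0 : ℝ) ≤ opNorm M⁻¹ := norm_nonneg _
  have hsf : (1 : ℝ) ≤ (f.1 : ℝ) ^ 2 + (f.2 : ℝ) ^ 2 := by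
    have := one_le_intsq f hf
    exact_mod_cast this
  -- q₀ * qF ≤ 2 det M
  have hprod : q₀ * qF ≤ 2 * M.det := by
    have hmul : (-c) * (-c) ≤ (q₀ / 2) * qF :=
      mul_le_mul hchalf hcf (by linarith) (by linarith)
    nlinarith
  have hN1 : (1 : ℝ) ≤ opNorm M⁻¹ * qF := le_trans hsf hBf
  -- q₀ ≤ 2 det M * ‖M⁻¹‖
  have hq0le : q₀ ≤ 2 * M.det * opNorm M⁻¹ := by
    have h1 : q₀ ≤ q₀ * (opNorm M⁻¹ * qF) := by nlinarith
    have h3 : opNorm M⁻¹ * (q₀ * qF) ≤ opNorm M⁻¹ * (2 * M.det) :=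
      mul_le_mul_of_nonneg_left hprod hNn
    nlinarith
  have final : (e.1 : ℝ) ^ 2 + (e.2 : ℝ) ^ 2 ≤ 2 * opNorm M * opNorm M⁻¹ := by
    have h4 : opNorm M⁻¹ * q₀ ≤ opNorm M⁻¹ * (2 * M.det * opNorm M⁻¹) :=
      mul_le_mul_of_nonneg_left hq0le hNn
    have h5 : opNorm M⁻¹ * (2 * M.det * opNorm M⁻¹)
        = 2 * (M.det * opNorm M⁻¹) * opNorm M⁻¹ := by ring
    nlinarith
  push_cast
  exact final

/-- Every element of an obtuse superbase satisfies the norm bound (stated for `e₀`). -/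
lemma elem_bound (hM10 : M 1 0 = M 0 1) (hpos : M.PosDef) {e₀ e₁ e₂ : ℤ × ℤ}
    (hsb : IsSuperbase e₀ e₁ e₂) (hob : IsObtuse M e₀ e₁ e₂) :
    ((e₀.1 ^ 2 + e₀.2 ^ 2 : ℤ) : ℝ) ≤ 2 * opNorm M * opNorm M⁻¹ := by
  obtain ⟨hc₁, hc₂, hc₁₂⟩ := hob
  have he₀ : e₀ ≠ 0 := sb_ne (sb_rot hsb)
  have he₁ : e₁ ≠ 0 := sb_ne hsb
  have he₂ : e₂ ≠ 0 := sb_ne (sb_swap hsb)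
  have hq₀ : 0 < qf M e₀ e₀ := q_pos hpos e₀ he₀
  have hsplit : qf M e₀ e₁ + qf M e₀ e₂ = -qf M e₀ e₀ := qf_split hM10 hsb.1
  -- -c₁ ≤ q e₁
  have hsum1 : e₁ + e₀ + e₂ = 0 := by rw [show e₁ + e₀ + e₂ = e₀ + e₁ + e₂ from by ring, hsb.1]
  have hsplit1 : qf M e₁ e₀ + qf M e₁ e₂ = -qf M e₁ e₁ := qf_split hM10 hsum1
  have hb1 : -qf M e₀ e₁ ≤ qf M e₁ e₁ := by
    rw [qf_comm hM10 e₀ e₁]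
    linarith
  -- -c₂ ≤ q e₂
  have hsum2 : e₂ + e₀ + e₁ = 0 := by rw [show e₂ + e₀ + e₁ = e₀ + e₁ + e₂ from by ring, hsb.1]
  have hsplit2 : qf M e₂ e₀ + qf M e₂ e₁ = -qf M e₂ e₂ := qf_split hM10 hsum2
  have hb2 : -qf M e₀ e₂ ≤ qf M e₂ e₂ := by
    rw [qf_comm hM10 e₀ e₂]
    have := qf_comm hM10 e₂ e₁
    linarith [hc₁₂, qf_comm hM10 e₁ e₂ ▸ hc₁₂]
  have hd01 : |det2 e₀ e₁| = 1 := (sb_rot hsb).2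
  have hd02 : |det2 e₀ e₂| = 1 := (sb_swap (sb_rot (sb_rot hsb))).2
  rcases le_or_gt (-qf M e₀ e₁) (qf M e₀ e₀ / 2) with hcase | hcase
  · exact partner_bound hM10 hpos e₀ e₁ he₀ he₁ hd01 hc₁ hcase hb1
  · have hcase2 : -qf M e₀ e₂ ≤ qf M e₀ e₀ / 2 := by linarith
    exact partner_bound hM10 hpos e₀ e₂ he₀ he₂ hd02 hc₂ hcase2 hb2

lemma ob_rot (hM10 : M 1 0 = M 0 1) {e₀ e₁ e₂ : ℤ × ℤ} (h : IsObtuse M e₀ e₁ e₂) :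
    IsObtuse M e₂ e₀ e₁ := by
  obtain ⟨a, b, c⟩ := h
  exact ⟨by rw [qf_comm hM10]; exact b, by rw [qf_comm hM10]; exact c, a⟩

/-- Energy of a triple. -/
noncomputable def En (M : Matrix (Fin 2) (Fin 2) ℝ) (t : (ℤ × ℤ) × (ℤ × ℤ) × (ℤ × ℤ)) : ℝ :=
  qf M t.1 t.1 + qf M t.2.1 t.2.1 + qf M t.2.2 t.2.2

lemma abs_le_of_sq_le (a N : ℤ) (h : a ^ 2 ≤ N) : -N ≤ a ∧ a ≤ N := by
  have hN : 0 ≤ N := le_trans (sq_nonneg a) h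
  constructor
  · rcases le_or_gt 0 a with ha | ha
    · linarith
    · nlinarith
  · rcases le_or_gt a 0 with ha | ha
    · linarith
    · nlinarith

/-- Existence of an obtuse superbase. -/
lemma exists_obtuse (hM10 : M 1 0 = M 0 1) (hpos : M.PosDef) :
    ∃ e₀ e₁ e₂ : ℤ × ℤ, IsSuperbase e₀ e₁ e₂ ∧ IsObtuse M e₀ e₁ e₂ := by
  classical
  set t₀ : (ℤ × ℤ) × (ℤ × ℤ) × (ℤ × ℤ) := ((-1, -1), (1, 0), (0, 1)) with ht₀def
  have hsb₀ : IsSuperbase t₀.1 t₀.2.1 t₀.2.2 := by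
    constructor
    · simp [ht₀def, Prod.ext_iff]
    · simp [ht₀def, det2]
  set S : Set ((ℤ × ℤ) × (ℤ × ℤ) × (ℤ × ℤ)) :=
    {t | IsSuperbase t.1 t.2.1 t.2.2 ∧ En M t ≤ En M t₀} with hSdef
  have ht₀S : t₀ ∈ S := ⟨hsb₀, le_refl _⟩
  -- boundedness
  set N : ℤ := max 0 ⌈opNorm M⁻¹ * En M t₀⌉ with hNdef
  have hcomp : ∀ t ∈ S, ∀ v ∈ ({t.1, t.2.1, t.2.2} : Set (ℤ × ℤ)), v.1 ^ 2 + v.2 ^ 2 ≤ N := by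
    rintro t ⟨hsb, hE⟩ v hv
    have h0 : t.1 ≠ 0 := sb_ne (sb_rot hsb)
    have h1 : t.2.1 ≠ 0 := sb_ne hsb
    have h2 : t.2.2 ≠ 0 := sb_ne (sb_swap hsb)
    have hq0 := q_pos hpos t.1 h0
    have hq1 := q_pos hpos t.2.1 h1
    have hq2 := q_pos hpos t.2.2 h2
    have hv' : v ≠ 0 ∧ qf M v v ≤ En M t := by
      rcases hv with rfl | rfl | rfl
      · exact ⟨h0, by unfold En; linarith⟩
      · exact ⟨h1, by unfold En; linarith⟩
      · exact ⟨h2, by unfold En; linarith⟩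
    have hB := normsq_le_q hM10 hpos v hv'.1
    have hNn : (0 : ℝ) ≤ opNorm M⁻¹ := norm_nonneg _
    have hEq : qf M v v ≤ En M t₀ := le_trans hv'.2 hE
    have hbound : ((v.1 : ℝ) ^ 2 + (v.2 : ℝ) ^ 2) ≤ (N : ℝ) := by
      have h3 : opNorm M⁻¹ * qf M v v ≤ opNorm M⁻¹ * En M t₀ :=
        mul_le_mul_of_nonneg_left hEq hNn
      have h4 : opNorm M⁻¹ * En M t₀ ≤ (⌈opNorm M⁻¹ * En M t₀⌉ : ℝ) := Int.le_ceil _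
      have h5 : ((⌈opNorm M⁻¹ * En M t₀⌉ : ℤ) : ℝ) ≤ (N : ℝ) := by
        exact_mod_cast le_max_right 0 ⌈opNorm M⁻¹ * En M t₀⌉
      linarith
    exact_mod_cast hbound
  have hSsub : S ⊆ Set.Icc ((-N, -N), (-N, -N), (-N, -N)) ((N, N), (N, N), (N, N)) := by
    intro t ht
    have b0 := hcomp t ht t.1 (by left; rfl)
    have b1 := hcomp t ht t.2.1 (by right; left; rfl)
    have b2 := hcomp t ht t.2.2 (by right; right; rfl)
    have c01 := abs_le_of_sq_le t.1.1 N (by nlinarith [sq_nonneg t.1.2])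
    have c02 := abs_le_of_sq_le t.1.2 N (by nlinarith [sq_nonneg t.1.1])
    have c11 := abs_le_of_sq_le t.2.1.1 N (by nlinarith [sq_nonneg t.2.1.2])
    have c12 := abs_le_of_sq_le t.2.1.2 N (by nlinarith [sq_nonneg t.2.1.1])
    have c21 := abs_le_of_sq_le t.2.2.1 N (by nlinarith [sq_nonneg t.2.2.2])
    have c22 := abs_le_of_sq_le t.2.2.2 N (by nlinarith [sq_nonneg t.2.2.1])
    simp only [Set.mem_Icc, Prod.le_def]
    tauto
  have hfin : S.Finite := Set.Finite.subset (Set.finite_Icc _ _) hSsub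
  obtain ⟨t, htS, hmin⟩ := Set.exists_min_image S (En M) hfin ⟨t₀, ht₀S⟩
  obtain ⟨e₀, e₁, e₂⟩ := t
  refine ⟨e₀, e₁, e₂, htS.1, ?_, ?_, ?_⟩
  · -- qf M e₀ e₁ ≤ 0
    by_contra hpos'
    push_neg at hpos'
    have hsb2 : IsSuperbase e₂ e₀ e₁ := sb_rot htS.1
    have hsb' : IsSuperbase e₀ (-e₁) (e₁ - e₀) := flip_sb hsb2
    have hE' := flip_energy hM10 hsb2.1
    have ht'S : (e₀, -e₁, e₁ - e₀) ∈ S := by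
      refine ⟨hsb', ?_⟩
      have : En M (e₀, -e₁, e₁ - e₀) = En M (e₀, e₁, e₂) - 4 * qf M e₀ e₁ := by
        unfold En at *
        simp only at *
        linarith
      rw [this]
      have := htS.2
      linarith
    have := hmin _ ht'S
    have heq : En M (e₀, -e₁, e₁ - e₀) = En M (e₀, e₁, e₂) - 4 * qf M e₀ e₁ := by
      unfold En at *
      simp only at *
      linarith
    rw [heq] at this
    linarith
  · -- qf M e₀ e₂ ≤ 0
    by_contra hpos'
    push_neg at hpos'
    have hsb2 : IsSuperbase e₁ e₂ e₀ := sb_rot (sb_rot htS.1)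
    have hsb' : IsSuperbase e₂ (-e₀) (e₀ - e₂) := flip_sb hsb2
    have hE' := flip_energy hM10 hsb2.1
    have hcm : qf M e₂ e₀ = qf M e₀ e₂ := qf_comm hM10 e₂ e₀
    have heq : En M (e₂, -e₀, e₀ - e₂) = En M (e₀, e₁, e₂) - 4 * qf M e₀ e₂ := by
      unfold En at *
      simp only at *
      linarith
    have ht'S : (e₂, -e₀, e₀ - e₂) ∈ S := by
      refine ⟨hsb', ?_⟩
      rw [heq]
      have := htS.2
      linarith
    have := hmin _ ht'S
    rw [heq] at this
    linarith
  · -- qf M e₁ e₂ ≤ 0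
    by_contra hpos'
    push_neg at hpos'
    have hsb' : IsSuperbase e₁ (-e₂) (e₂ - e₁) := flip_sb htS.1
    have hE' := flip_energy hM10 htS.1.1
    have heq : En M (e₁, -e₂, e₂ - e₁) = En M (e₀, e₁, e₂) - 4 * qf M e₁ e₂ := by
      unfold En at *
      simp only at *
      linarith
    have ht'S : (e₁, -e₂, e₂ - e₁) ∈ S := by
      refine ⟨hsb', ?_⟩
      rw [heq]
      have := htS.2
      linarith
    have := hmin _ ht'S
    rw [heq] at this
    linarith

end Main

end Stmt4Aux


/-- For every symmetric positive definite `M` there is an `M`-obtuse superbase of `ℤ²`,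
each of whose elements `e` satisfies `‖e‖² ≤ 2 ‖M‖ ‖M⁻¹‖`. -/
theorem stmt4_obtuse_superbase_exists (M : Matrix (Fin 2) (Fin 2) ℝ)
    (hsym : M.IsSymm) (hpos : M.PosDef) :
    ∃ e₀ e₁ e₂ : ℤ × ℤ, IsSuperbase e₀ e₁ e₂ ∧ IsObtuse M e₀ e₁ e₂ ∧
      ∀ e ∈ ({e₀, e₁, e₂} : Set (ℤ × ℤ)),
        ((e.1 ^ 2 + e.2 ^ 2 : ℤ) : ℝ) ≤ 2 * opNorm M * opNorm M⁻¹ := by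
  have hM10 : M 1 0 = M 0 1 := hsym.apply 0 1
  obtain ⟨e₀, e₁, e₂, hsb, hob⟩ := Stmt4Aux.exists_obtuse hM10 hpos
  refine ⟨e₀, e₁, e₂, hsb, hob, ?_⟩
  have hsb1 : IsSuperbase e₂ e₀ e₁ := Stmt4Aux.sb_rot hsb
  have hob1 : IsObtuse M e₂ e₀ e₁ := Stmt4Aux.ob_rot hM10 hob
  have hsb2 : IsSuperbase e₁ e₂ e₀ := Stmt4Aux.sb_rot hsb1
  have hob2 : IsObtuse M e₁ e₂ e₀ := Stmt4Aux.ob_rot hM10 hob1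
  have b0 := Stmt4Aux.elem_bound hM10 hpos hsb hob
  have b1 := Stmt4Aux.elem_bound hM10 hpos hsb2 hob2
  have b2 := Stmt4Aux.elem_bound hM10 hpos hsb1 hob1
  intro e he
  simp only [Set.mem_insert_iff, Set.mem_singleton_iff] at he
  rcases he with rfl | rfl | rfl
  · exact b0
  · exact b1
  · exact b2
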